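/- Let p be a prime, let G be a finite group that is a 𝒫₁⁺(p)-group with respect to a pair (ρ,τ), and let N be a normal subgroup of G. Then the quotient group G/N is a 𝒫₁⁺(p)-group with respect to the pair (ρN, τN) of images of ρ and τ in G/N. -/

import Mathlib

open Pointwise

/-- A group is cyclic or dihedral. -/
def IsCyclicOrDihedral (H : Type*) [Group H] : Prop :=
  IsCyclic H ∨ ∃ n : ℕ, 0 < n ∧ Nonempty (H ≃* DihedralGroup n)

/-- `G` is a `𝒫₀(p)`-group with respect to `(ρ, τ)`. -/
def IsP0 (p : ℕ) {G : Type*} [Group G] (ρ τ : G) : Prop :=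
  orderOf τ = 2 ∧ Subgroup.closure {ρ, τ} = ⊤ ∧
    ∃ n : ℕ, 0 < n ∧
      Nat.card G / orderOf ρ +
          Nat.card G / Nat.card (Subgroup.closure {τ, ρ⁻¹ * τ * ρ} : Subgroup G) +
          p ^ n =
        Nat.card G / 2

/-- `G` is a `𝒫₁(p)`-group with respect to subgroups `H₁` and `H₂`. -/
def IsP1With (p : ℕ) {G : Type*} [Group G] (H₁ H₂ : Subgroup G) : Prop :=
  IsCyclicOrDihedral H₁ ∧ IsCyclicOrDihedral H₂ ∧
    ∃ n : ℕ, Nat.card G = p ^ n * Nat.lcm (Nat.card H₁) (Nat.card H₂)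

/-- `G` is a `𝒫₁(p)`-group. -/
def IsP1 (p : ℕ) (G : Type*) [Group G] : Prop :=
  ∃ H₁ H₂ : Subgroup G, IsP1With p H₁ H₂

/-- `G` is a `𝒫₁⁺(p)`-group with respect to `(ρ, τ)`. -/
def IsP1Plus (p : ℕ) {G : Type*} [Group G] (ρ τ : G) : Prop :=
  orderOf τ ≤ 2 ∧ Subgroup.closure {ρ, τ} = ⊤ ∧
    (Odd p → Subgroup.closure {ρ⁻¹ * τ⁻¹ * ρ * τ, ρ} = ⊤) ∧
    IsP1With p (Subgroup.closure {τ, ρ⁻¹ * τ * ρ}) (Subgroup.zpowers ρ)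

/-- `G` is a `𝒫₂(p)`-group. -/
def IsP2 (p : ℕ) (G : Type*) [Group G] : Prop :=
  ∀ r : ℕ, r.Prime → r ≠ p → ∀ S : Sylow r G, IsCyclicOrDihedral (S : Subgroup G)

/-- `G` is a `𝒫₂⁺(p)`-group with respect to `(ρ, τ)`. -/
def IsP2Plus (p : ℕ) {G : Type*} [Group G] (ρ τ : G) : Prop :=
  orderOf τ ≤ 2 ∧ Subgroup.closure {ρ, τ} = ⊤ ∧
    (Odd p → Subgroup.closure {ρ⁻¹ * τ⁻¹ * ρ * τ, ρ} = ⊤) ∧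
    IsP2 p G

/-- A Hall `{2,3}`-subgroup. -/
def IsHall23 {G : Type*} [Group G] (H : Subgroup G) : Prop :=
  (∃ i j : ℕ, Nat.card H = 2 ^ i * 3 ^ j) ∧ Nat.Coprime H.index 6

/-- A Hall `{2,3}'`-subgroup. -/
def IsHall23' {G : Type*} [Group G] (K : Subgroup G) : Prop :=
  Nat.Coprime (Nat.card K) 6 ∧ ∃ i j : ℕ, K.index = 2 ^ i * 3 ^ j

/-- The projective special linear group of degree 2 over `R`. -/
abbrev ProjSL2 (R : Type*) [CommRing R] : Type _ :=
  Matrix.SpecialLinearGroup (Fin 2) R ⧸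
    Subgroup.center (Matrix.SpecialLinearGroup (Fin 2) R)

/-- The projective general linear group of degree 2 over `R`. -/
abbrev ProjGL2 (R : Type*) [CommRing R] : Type _ :=
  Matrix.GeneralLinearGroup (Fin 2) R ⧸
    Subgroup.center (Matrix.GeneralLinearGroup (Fin 2) R)

theorem aux_recognition {K : Type*} [Group K] [Finite K] (a b : K)
    (hb : b * b = 1) (hc : b * a * b⁻¹ = a⁻¹)
    (hcl : Subgroup.closure ({a, b} : Set K) = ⊤) : IsCyclicOrDihedral K := by
  by_cases hmem : b ∈ Subgroup.zpowers a
  · left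
    have htop : Subgroup.zpowers a = ⊤ := by
      rw [eq_top_iff, ← hcl, Subgroup.closure_le]
      rw [Set.insert_subset_iff, Set.singleton_subset_iff]
      exact ⟨Subgroup.mem_zpowers a, hmem⟩
    exact ⟨⟨a, fun x => show x ∈ Subgroup.zpowers a by rw [htop]; trivial⟩⟩
  · right
    set n := orderOf a with hn
    have hn0 : 0 < n := orderOf_pos a
    haveI : NeZero n := ⟨hn0.ne'⟩
    refine ⟨n, hn0, ?_⟩
    set e : ZMod n → K := fun i => a ^ i.val with he
    have he_add : ∀ i j : ZMod n, e (i + j) = e i * e j := by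
      intro i j
      simp only [he, ← pow_add]
      rw [pow_eq_pow_iff_modEq, ← hn, ZMod.val_add]
      exact Nat.mod_modEq _ n
    have he_zero : e 0 = 1 := by simp [he]
    have he_neg : ∀ i : ZMod n, e (-i) = (e i)⁻¹ := by
      intro i
      have : e (-i) * e i = 1 := by rw [← he_add, neg_add_cancel, he_zero]
      exact eq_inv_of_mul_eq_one_left this
    have hconj : ∀ i : ZMod n, b * e i * b⁻¹ = e (-i) := by
      intro i
      rw [he_neg]
      simp only [he]
      rw [← conj_pow, hc, inv_pow]
    have hbinv : b⁻¹ = b := inv_eq_of_mul_eq_one_right hb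
    have hconj2 : ∀ i : ZMod n, b * e (-i) = e i * b := by
      intro i
      have h2 := hconj (-i)
      rw [neg_neg] at h2
      rwa [mul_inv_eq_iff_eq_mul] at h2
    let f : DihedralGroup n → K := fun x => match x with
      | .r i => e i
      | .sr i => b * e i
    have hf_mul : ∀ x y : DihedralGroup n, f (x * y) = f x * f y := by
      rintro (i | i) (j | j)
      · show e (i + j) = e i * e j
        exact he_add i j
      · show b * e (j - i) = e i * (b * e j)
        symm
        calc e i * (b * e j) = (e i * b) * e j := by group
          _ = (b * e (-i)) * e j := by rw [hconj2]
          _ = b * (e (-i) * e j) := by group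
          _ = b * e (j - i) := by rw [← he_add, neg_add_eq_sub]
      · show b * e (i + j) = (b * e i) * e j
        rw [mul_assoc, he_add]
      · show e (j - i) = (b * e i) * (b * e j)
        symm
        calc (b * e i) * (b * e j) = b * ((e i * b) * e j) := by group
          _ = b * ((b * e (-i)) * e j) := by rw [hconj2]
          _ = (b * b) * (e (-i) * e j) := by group
          _ = e (j - i) := by rw [hb, one_mul, ← he_add, neg_add_eq_sub]
    let F : DihedralGroup n →* K :=
      { toFun := f
        map_one' := by show e 0 = 1; exact he_zero
        map_mul' := hf_mul }
    have hFr : ∀ i : ZMod n, F (.r i) = e i := fun _ => rfl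
    have hFsr : ∀ i : ZMod n, F (.sr i) = b * e i := fun _ => rfl
    have hFa : F (.r 1) = a := by
      rw [hFr]
      show a ^ (1 : ZMod n).val = a
      conv_rhs => rw [← pow_one a]
      rw [pow_eq_pow_iff_modEq, ← hn]
      have h1 : ((1 : ℕ) : ZMod n) = (1 : ZMod n) := by norm_cast
      rw [← h1, ZMod.val_natCast]
      exact Nat.mod_modEq 1 n
    have hFb : F (.sr 0) = b := by rw [hFsr, he_zero, mul_one]
    have hinj : Function.Injective F := by
      rw [injective_iff_map_eq_one]
      rintro (i | i) hx
      · rw [hFr] at hx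
        simp only [he] at hx
        have hdvd : n ∣ i.val := orderOf_dvd_of_pow_eq_one hx
        have hv : i.val = 0 := Nat.eq_zero_of_dvd_of_lt hdvd (ZMod.val_lt i)
        have hi : i = 0 := by rwa [← ZMod.val_eq_zero]
        rw [hi]
        exact DihedralGroup.one_def.symm
      · exfalso
        rw [hFsr] at hx
        apply hmem
        have hbe : b = (e i)⁻¹ := by rwa [mul_eq_one_iff_eq_inv] at hx
        rw [hbe]
        refine inv_mem (Subgroup.mem_zpowers_iff.mpr ⟨(i.val : ℤ), ?_⟩)
        simp only [he]
        exact zpow_natCast a i.val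
    have hsurj : Function.Surjective F := by
      rw [← MonoidHom.range_eq_top]
      rw [eq_top_iff, ← hcl, Subgroup.closure_le]
      rw [Set.insert_subset_iff, Set.singleton_subset_iff]
      exact ⟨⟨.r 1, hFa⟩, ⟨.sr 0, hFb⟩⟩
    exact ⟨(MulEquiv.ofBijective F ⟨hinj, hsurj⟩).symm⟩

theorem aux_dihedral_closure (n : ℕ) :
    Subgroup.closure ({DihedralGroup.r 1, DihedralGroup.sr 0} : Set (DihedralGroup n)) = ⊤ := by
  rw [eq_top_iff]
  intro x _
  have hr : (DihedralGroup.r 1 : DihedralGroup n) ∈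
      Subgroup.closure ({DihedralGroup.r 1, DihedralGroup.sr 0} : Set (DihedralGroup n)) :=
    Subgroup.subset_closure (Set.mem_insert _ _)
  have hs : (DihedralGroup.sr 0 : DihedralGroup n) ∈
      Subgroup.closure ({DihedralGroup.r 1, DihedralGroup.sr 0} : Set (DihedralGroup n)) :=
    Subgroup.subset_closure (Set.mem_insert_of_mem _ rfl)
  have hrinv' : ∀ i : ZMod n, (DihedralGroup.r i : DihedralGroup n)⁻¹ = DihedralGroup.r (-i) := by
    intro i
    apply inv_eq_of_mul_eq_one_right
    rw [DihedralGroup.r_mul_r, add_neg_cancel, ← DihedralGroup.one_def]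
  have hzpow : ∀ k : ℤ, (DihedralGroup.r 1 : DihedralGroup n) ^ k = DihedralGroup.r (k : ZMod n) := by
    intro k
    cases k with
    | ofNat m =>
      rw [Int.ofNat_eq_coe, zpow_natCast, DihedralGroup.r_one_pow]
      norm_cast
    | negSucc m =>
      rw [zpow_negSucc, DihedralGroup.r_one_pow, hrinv', Int.cast_negSucc]
  have key : ∀ i : ZMod n, (DihedralGroup.r i : DihedralGroup n) ∈
      Subgroup.closure ({DihedralGroup.r 1, DihedralGroup.sr 0} : Set (DihedralGroup n)) := by
    intro i
    obtain ⟨k, rfl⟩ := ZMod.intCast_surjective i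
    rw [← hzpow]
    exact zpow_mem hr k
  cases x with
  | r i => exact key i
  | sr i =>
    have : (DihedralGroup.sr i : DihedralGroup n) = DihedralGroup.sr 0 * DihedralGroup.r i := by
      rw [DihedralGroup.sr_mul_r, zero_add]
    rw [this]
    exact mul_mem hs (key i)

theorem aux_cd_surj {H K : Type*} [Group H] [Group K] [Finite K]
    (f : H →* K) (hf : Function.Surjective f) (h : IsCyclicOrDihedral H) :
    IsCyclicOrDihedral K := by
  rcases h with hcyc | ⟨n, hn, ⟨φ⟩⟩
  · exact Or.inl (isCyclic_of_surjective f hf)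
  · set g : DihedralGroup n →* K := f.comp φ.symm.toMonoidHom with hg
    have hgsurj : Function.Surjective g := hf.comp φ.symm.surjective
    set a := g (.r 1) with ha
    set b := g (.sr 0) with hb'
    have hb : b * b = 1 := by
      rw [hb', ← map_mul, DihedralGroup.sr_mul_self, map_one]
    have hrinv : (DihedralGroup.r 1 : DihedralGroup n)⁻¹ = DihedralGroup.r (-1) := by
      apply inv_eq_of_mul_eq_one_right
      rw [DihedralGroup.r_mul_r, add_neg_cancel, ← DihedralGroup.one_def]
    have hsrinv : (DihedralGroup.sr 0 : DihedralGroup n)⁻¹ = DihedralGroup.sr 0 :=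
      inv_eq_of_mul_eq_one_right (DihedralGroup.sr_mul_self 0)
    have hc : b * a * b⁻¹ = a⁻¹ := by
      rw [ha, hb', ← map_inv, ← map_inv, ← map_mul, ← map_mul]
      congr 1
      rw [hsrinv, hrinv, DihedralGroup.sr_mul_r, zero_add, DihedralGroup.sr_mul_sr, zero_sub]
    have hcl : Subgroup.closure ({a, b} : Set K) = ⊤ := by
      rw [ha, hb', ← Set.image_pair, ← MonoidHom.map_closure, aux_dihedral_closure,
        Subgroup.map_top_of_surjective _ hgsurj]
    exact aux_recognition a b hb hc hcl

theorem aux_card_map_mul {G : Type*} [Group G] [Finite G] (N : Subgroup G) [N.Normal]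
    (H : Subgroup G) :
    ∃ k : ℕ, Nat.card H = Nat.card (H.map (QuotientGroup.mk' N)) * k ∧ k ∣ Nat.card N := by
  set π := QuotientGroup.mk' N with hπ
  set g := π.comp H.subtype with hg
  have hker : g.ker = N.comap H.subtype := by
    rw [hg, ← MonoidHom.comap_ker, QuotientGroup.ker_mk']
  have hrange : g.range = H.map π := by
    rw [hg, MonoidHom.range_comp, H.range_subtype]
  refine ⟨Nat.card g.ker, ?_, ?_⟩
  · have h1 : Nat.card H = Nat.card (↥H ⧸ g.ker) * Nat.card g.ker :=
      Subgroup.card_eq_card_quotient_mul_card_subgroup g.ker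
    have h2 : Nat.card (↥H ⧸ g.ker) = Nat.card (H.map π) := by
      rw [← hrange]
      exact Nat.card_congr (QuotientGroup.quotientKerEquivRange g).toEquiv
    rw [h1, h2]
  · rw [hker]
    exact Subgroup.card_comap_dvd_of_injective N H.subtype H.subtype_injective

theorem aux_card_quot {G : Type*} [Group G] [Finite G] {p : ℕ} (hp : p.Prime)
    (H₁ H₂ N : Subgroup G) [N.Normal] {n : ℕ}
    (hcard : Nat.card G = p ^ n * Nat.lcm (Nat.card H₁) (Nat.card H₂)) :
    ∃ m, Nat.card (G ⧸ N) = p ^ m *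
      Nat.lcm (Nat.card (H₁.map (QuotientGroup.mk' N)))
        (Nat.card (H₂.map (QuotientGroup.mk' N))) := by
  set π := QuotientGroup.mk' N with hπ
  obtain ⟨k₁, hk₁, hk₁d⟩ := aux_card_map_mul N H₁
  obtain ⟨k₂, hk₂, hk₂d⟩ := aux_card_map_mul N H₂
  set b₁ := Nat.card (H₁.map π) with hb₁
  set b₂ := Nat.card (H₂.map π) with hb₂
  set L := Nat.lcm b₁ b₂ with hL
  set aQ := Nat.card (G ⧸ N) with haQ
  set nN := Nat.card N with hnN
  -- positivity
  have hb₁0 : b₁ ≠ 0 := Nat.card_pos.ne'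
  have hb₂0 : b₂ ≠ 0 := Nat.card_pos.ne'
  have haQ0 : aQ ≠ 0 := Nat.card_pos.ne'
  have hnN0 : nN ≠ 0 := Nat.card_pos.ne'
  have hh₁0 : Nat.card H₁ ≠ 0 := Nat.card_pos.ne'
  have hh₂0 : Nat.card H₂ ≠ 0 := Nat.card_pos.ne'
  have hG0 : Nat.card G ≠ 0 := Nat.card_pos.ne'
  have hL0 : L ≠ 0 := Nat.lcm_ne_zero hb₁0 hb₂0
  have hk₁0 : k₁ ≠ 0 := fun h => hh₁0 (by rw [hk₁, h, mul_zero])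
  have hk₂0 : k₂ ≠ 0 := fun h => hh₂0 (by rw [hk₂, h, mul_zero])
  have hLdvd : L ∣ aQ :=
    Nat.lcm_dvd (Subgroup.card_subgroup_dvd_card _) (Subgroup.card_subgroup_dvd_card _)
  obtain ⟨t, ht⟩ := hLdvd
  have ht0 : t ≠ 0 := fun h => haQ0 (by rw [ht, h, mul_zero])
  have hGeq : Nat.card G = aQ * nN := Subgroup.card_eq_card_quotient_mul_card_subgroup N
  -- every prime factor of t is p
  have hkey : ∀ {q : ℕ}, q.Prime → q ∣ t → q = p := by
    intro q hq hqt
    by_contra hqp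
    have hq1 : (Nat.card H₁).factorization q = b₁.factorization q + k₁.factorization q := by
      rw [hk₁, Nat.factorization_mul hb₁0 hk₁0, Finsupp.add_apply]
    have hq2 : (Nat.card H₂).factorization q = b₂.factorization q + k₂.factorization q := by
      rw [hk₂, Nat.factorization_mul hb₂0 hk₂0, Finsupp.add_apply]
    have hq3 : k₁.factorization q ≤ nN.factorization q :=
      (Nat.factorization_le_iff_dvd hk₁0 hnN0).mpr hk₁d q
    have hq4 : k₂.factorization q ≤ nN.factorization q :=
      (Nat.factorization_le_iff_dvd hk₂0 hnN0).mpr hk₂d q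
    have hq5 : (Nat.card G).factorization q = aQ.factorization q + nN.factorization q := by
      rw [hGeq, Nat.factorization_mul haQ0 hnN0, Finsupp.add_apply]
    have hq6 : (Nat.card G).factorization q =
        max ((Nat.card H₁).factorization q) ((Nat.card H₂).factorization q) := by
      rw [hcard, Nat.factorization_mul (pow_ne_zero n hp.pos.ne') (Nat.lcm_ne_zero hh₁0 hh₂0),
        Finsupp.add_apply, Nat.Prime.factorization_pow hp, Finsupp.single_eq_of_ne' (Ne.symm hqp),
        Nat.factorization_lcm hh₁0 hh₂0, Finsupp.sup_apply, zero_add]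
    have hq7 : aQ.factorization q = L.factorization q + t.factorization q := by
      rw [ht, Nat.factorization_mul hL0 ht0, Finsupp.add_apply]
    have hq8 : b₁.factorization q ≤ L.factorization q :=
      (Nat.factorization_le_iff_dvd hb₁0 hL0).mpr (Nat.dvd_lcm_left _ _) q
    have hq9 : b₂.factorization q ≤ L.factorization q :=
      (Nat.factorization_le_iff_dvd hb₂0 hL0).mpr (Nat.dvd_lcm_right _ _) q
    have hq10 : 1 ≤ t.factorization q := hq.factorization_pos_of_dvd ht0 hqt
    rcases max_choice ((Nat.card H₁).factorization q) ((Nat.card H₂).factorization q) with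
      hm | hm <;> rw [hm] at hq6 <;> omega
  rcases Nat.eq_prime_pow_of_unique_prime_dvd ht0 (fun hd hdvd => hkey hd hdvd) with hm
  exact ⟨t.primeFactorsList.length, by rw [ht, ← hm, mul_comm]⟩

/-- If the finite group `G` is a `𝒫₁⁺(p)`-group with respect to `(ρ, τ)` and `N` is a normal
subgroup of `G`, then `G/N` is a `𝒫₁⁺(p)`-group with respect to `(ρN, τN)`. -/
theorem stmt5 {G : Type*} [Group G] [Finite G] {p : ℕ} (hp : p.Prime)
    (ρ τ : G) (h : IsP1Plus p ρ τ) (N : Subgroup G) [N.Normal] :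
    IsP1Plus p (ρ : G ⧸ N) (τ : G ⧸ N) := by
  obtain ⟨hτ, hgen, hcomm, hcd1, hcd2, n, hcard⟩ := h
  set π := QuotientGroup.mk' N with hπ
  have hπs : Function.Surjective π := QuotientGroup.mk'_surjective N
  have e₁ : (Subgroup.closure {τ, ρ⁻¹ * τ * ρ}).map π =
      Subgroup.closure {(τ : G ⧸ N), (ρ : G ⧸ N)⁻¹ * (τ : G ⧸ N) * (ρ : G ⧸ N)} := by
    rw [MonoidHom.map_closure, Set.image_pair]
    rfl
  have e₂ : (Subgroup.zpowers ρ).map π = Subgroup.zpowers ((ρ : G ⧸ N)) :=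
    MonoidHom.map_zpowers π ρ
  refine ⟨?_, ?_, ?_, ?_, ?_, ?_⟩
  · exact le_trans (Nat.le_of_dvd (orderOf_pos τ) (orderOf_map_dvd π τ)) hτ
  · have h2 : Subgroup.closure ({π ρ, π τ} : Set (G ⧸ N)) = ⊤ := by
      rw [← Set.image_pair, ← MonoidHom.map_closure, hgen,
        Subgroup.map_top_of_surjective _ hπs]
    exact h2
  · intro hodd
    have h3 : Subgroup.closure ({π (ρ⁻¹ * τ⁻¹ * ρ * τ), π ρ} : Set (G ⧸ N)) = ⊤ := by
      rw [← Set.image_pair, ← MonoidHom.map_closure, hcomm hodd,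
        Subgroup.map_top_of_surjective _ hπs]
    have he : π (ρ⁻¹ * τ⁻¹ * ρ * τ) =
        (ρ : G ⧸ N)⁻¹ * (τ : G ⧸ N)⁻¹ * (ρ : G ⧸ N) * (τ : G ⧸ N) := rfl
    rwa [he] at h3
  · rw [← e₁]
    exact aux_cd_surj (π.subgroupMap _) (π.subgroupMap_surjective _) hcd1
  · rw [← e₂]
    exact aux_cd_surj (π.subgroupMap _) (π.subgroupMap_surjective _) hcd2
  · rw [← e₁, ← e₂]
    exact aux_card_quot hp _ _ N hcard
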